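/- arXiv:1604.05533 — 4 statements merged into one kernel-verified Lean document; each statement's English description precedes it below -/
import Mathlib

section
/- Let g = [[a,b],[c,d]] ∈ GL₂(ℂ) with c+d ≠ 0, g1 = (a+b)/(c+d) ≠ 1 and a ≠ c, and assume g satisfies condition (C). Then for all k, m ∈ ℤ≥0 and all y, w ∈ ℂ: 𝔹_k^{(−m)}(y, w−1; g) = −(1/det g) · 𝔹_m^{(−k)}(w, y−1; g^{−1}). -/
open Set

/-- `Φ(z,−k,y)`: the rational function of `z`, analytic on `ℂ∖{1}`, which equals
`Σ_{n=0}^∞ (y+n)^k z^n` for `|z| < 1`; defined by `Φ(z,0,y) = 1/(1−z)` and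
`Φ(z,−(k+1),y) = (y + θ_z)·Φ(z,−k,y)` with the Euler operator `θ_z = z·d/dz`. -/
noncomputable def PhiNeg : ℕ → ℂ → ℂ → ℂ
  | 0 => fun _ z => 1 / (1 - z)
  | k + 1 => fun y z => y * PhiNeg k y z + z * deriv (PhiNeg k y) z

/-- `j_D(g,z) = cz + d` for `g = [[a,b],[c,d]]`. -/
def jD (g : Matrix (Fin 2) (Fin 2) ℂ) (z : ℂ) : ℂ := g 1 0 * z + g 1 1

/-- The Möbius action `gz = (az+b)/(cz+d)`. -/
noncomputable def act (g : Matrix (Fin 2) (Fin 2) ℂ) (z : ℂ) : ℂ :=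
  (g 0 0 * z + g 0 1) / jD g z

/-- The poly-Bernoulli polynomial `𝔹_m^{(−k)}(y,w;g)`, defined as `m!` times the `m`-th
Taylor coefficient at `t = 0` of `t ↦ e^{wt}·Φ(g e^{−t},−k,y)/j_D(g,e^{−t})`, i.e. the
`m`-th derivative of this function at `0`. -/
noncomputable def polyB (g : Matrix (Fin 2) (Fin 2) ℂ) (k m : ℕ) (y w : ℂ) : ℂ :=
  iteratedDeriv m (fun t : ℂ =>
    Complex.exp (w * t) * PhiNeg k y (act g (Complex.exp (-t))) /
      jD g (Complex.exp (-t))) 0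

/-- The Möbius transformation of the matrix `[[a,b],[c,d]]` on the Riemann sphere. -/
noncomputable def mob (a b c d : ℂ) (z : OnePoint ℂ) : OnePoint ℂ :=
  Option.elim (show Option ℂ from z)
    (if c = 0 then OnePoint.infty else (((a / c : ℂ) : OnePoint ℂ)))
    (fun w => if c * w + d = 0 then OnePoint.infty
      else (((a * w + b) / (c * w + d) : ℂ) : OnePoint ℂ))

/-- The circular arc `[1,+∞] = {x ∈ ℝ : x ≥ 1} ∪ {∞}` in the Riemann sphere. -/
def raySet : Set (OnePoint ℂ) :=
  {z | ∃ x : ℝ, 1 ≤ x ∧ z = ((x : ℂ) : OnePoint ℂ)} ∪ {OnePoint.infty}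

/-- Condition (C): `g([1,+∞]) ∩ [1,+∞] ⊆ {g1, g∞} ∩ {1, ∞}`. -/
noncomputable def condC (g : Matrix (Fin 2) (Fin 2) ℂ) : Prop :=
  mob (g 0 0) (g 0 1) (g 1 0) (g 1 1) '' raySet ∩ raySet ⊆
    ({mob (g 0 0) (g 0 1) (g 1 0) (g 1 1) (((1 : ℂ) : OnePoint ℂ)),
      mob (g 0 0) (g 0 1) (g 1 0) (g 1 1) OnePoint.infty} : Set (OnePoint ℂ)) ∩
      ({((1 : ℂ) : OnePoint ℂ), OnePoint.infty} : Set (OnePoint ℂ))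


open Complex Filter

section Aux


lemma iteratedDeriv_cmul (c : ℂ) (f : ℂ → ℂ) (n : ℕ) :
    iteratedDeriv n (fun x => c * f x) = fun x => c * iteratedDeriv n f x := by
  induction n with
  | zero => simp [iteratedDeriv_zero]
  | succ n ih =>
    funext x
    rw [iteratedDeriv_succ, ih, iteratedDeriv_succ, deriv_const_mul_field]

lemma phiNeg_analyticOnNhd (m : ℕ) (y : ℂ) :
    AnalyticOnNhd ℂ (PhiNeg m y) {z : ℂ | z ≠ 1} := by
  induction m with
  | zero =>
    intro z hz
    exact analyticAt_const.div (analyticAt_const.sub (analyticAt_id))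
      (sub_ne_zero.mpr (Ne.symm hz))
  | succ m ih =>
    intro z hz
    have hd : AnalyticAt ℂ (deriv (PhiNeg m y)) z :=
      ih.deriv z hz
    exact (analyticAt_const.mul (ih z hz)).add (analyticAt_id.mul hd)

lemma L1' (y u : ℂ) (m : ℕ) :
    ∀ x : ℂ, u * Complex.exp x ≠ 1 →
      iteratedDeriv m (fun x => Complex.exp (y * x) / (1 - u * Complex.exp x)) x
        = Complex.exp (y * x) * PhiNeg m y (u * Complex.exp x) := by
  induction m with
  | zero =>
    intro x hx
    simp only [iteratedDeriv_zero, PhiNeg, mul_one_div, div_eq_mul_inv, one_mul]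
  | succ m ih =>
    intro x hx
    have hopen : IsOpen {x : ℂ | u * Complex.exp x ≠ 1} :=
      isOpen_ne.preimage (by continuity)
    have hev : iteratedDeriv m (fun x => Complex.exp (y * x) / (1 - u * Complex.exp x))
        =ᶠ[nhds x] fun x => Complex.exp (y * x) * PhiNeg m y (u * Complex.exp x) := by
      filter_upwards [hopen.mem_nhds hx] with x' hx' using ih x' hx'
    rw [iteratedDeriv_succ, hev.deriv_eq]
    -- compute the derivative
    have h1 : HasDerivAt (fun x : ℂ => Complex.exp (y * x)) (Complex.exp (y * x) * y) x := by
      simpa using ((hasDerivAt_id x).const_mul y).cexp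
    have hinner : HasDerivAt (fun x : ℂ => u * Complex.exp x) (u * Complex.exp x) x := by
      simpa using (Complex.hasDerivAt_exp x).const_mul u
    have houter : HasDerivAt (PhiNeg m y) (deriv (PhiNeg m y) (u * Complex.exp x))
        (u * Complex.exp x) :=
      ((phiNeg_analyticOnNhd m y) _ hx).differentiableAt.hasDerivAt
    have h2 : HasDerivAt (fun x : ℂ => PhiNeg m y (u * Complex.exp x))
        (deriv (PhiNeg m y) (u * Complex.exp x) * (u * Complex.exp x)) x :=
      houter.comp x hinner
    have : deriv (fun x => Complex.exp (y * x) * PhiNeg m y (u * Complex.exp x)) x = _ :=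
      (h1.mul h2).deriv
    rw [this]
    show _ = Complex.exp (y * x) *
      (y * PhiNeg m y (u * Complex.exp x) +
        (u * Complex.exp x) * deriv (PhiNeg m y) (u * Complex.exp x))
    ring

lemma L1 (y p q : ℂ) (hp : p ≠ 0) (hpq : p - q ≠ 0) (m : ℕ) :
    iteratedDeriv m (fun x => Complex.exp (y * x) / (p - q * Complex.exp x)) 0
      = PhiNeg m y (q / p) / p := by
  have hfun : (fun x => Complex.exp (y * x) / (p - q * Complex.exp x))
      = fun x => (1 / p) * (Complex.exp (y * x) / (1 - (q / p) * Complex.exp x)) := by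
    funext x
    have h1 : 1 - q / p * Complex.exp x = (p - q * Complex.exp x) / p := by
      field_simp
    rw [h1, div_div_eq_mul_div, one_div]
    have h2 : p⁻¹ * (Complex.exp (y * x) * p / (p - q * Complex.exp x))
        = (p⁻¹ * p) * (Complex.exp (y * x) / (p - q * Complex.exp x)) := by ring
    rw [h2, inv_mul_cancel₀ hp, one_mul]
  rw [hfun, iteratedDeriv_cmul]
  have hu : (q / p) * Complex.exp 0 ≠ 1 := by
    rw [Complex.exp_zero, mul_one]
    intro h
    apply hpq
    field_simp at h
    rw [h]
    ring
  show 1 / p * iteratedDeriv m (fun x => Complex.exp (y * x) / (1 - q / p * Complex.exp x)) 0 = _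
  rw [L1' y (q / p) m 0 hu]
  simp only [mul_zero, Complex.exp_zero, mul_one, one_mul]
  rw [one_div, inv_mul_eq_div]


noncomputable def pd (v : ℂ × ℂ) (f : ℂ × ℂ → ℂ) : ℂ × ℂ → ℂ := fun p => fderiv ℂ f p v

lemma pd_analytic {f : ℂ × ℂ → ℂ} {U : Set (ℂ × ℂ)}
    (hf : AnalyticOnNhd ℂ f U) (v : ℂ × ℂ) : AnalyticOnNhd ℂ (pd v f) U :=
  (ContinuousLinearMap.apply ℂ ℂ v).comp_analyticOnNhd hf.fderiv

lemma pd_iter_analytic {f : ℂ × ℂ → ℂ} {U : Set (ℂ × ℂ)}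
    (hf : AnalyticOnNhd ℂ f U) (v : ℂ × ℂ) (m : ℕ) :
    AnalyticOnNhd ℂ ((pd v)^[m] f) U := by
  induction m with
  | zero => exact hf
  | succ m ih => rw [Function.iterate_succ_apply']; exact pd_analytic ih v

lemma pd_congr {f g : ℂ × ℂ → ℂ} {U : Set (ℂ × ℂ)} (hU : IsOpen U)
    (h : ∀ q ∈ U, f q = g q) {p : ℂ × ℂ} (hp : p ∈ U) (v : ℂ × ℂ) :
    pd v f p = pd v g p := by
  have : f =ᶠ[nhds p] g := by filter_upwards [hU.mem_nhds hp] with q hq using h q hq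
  unfold pd
  rw [this.fderiv_eq]

lemma pd_comm {f : ℂ × ℂ → ℂ} {U : Set (ℂ × ℂ)} (hU : IsOpen U)
    (hf : AnalyticOnNhd ℂ f U) {p : ℂ × ℂ} (hp : p ∈ U) (v w : ℂ × ℂ) :
    pd v (pd w f) p = pd w (pd v f) p := by
  have hsymm : IsSymmSndFDerivAt ℂ f p :=
    ((hf p hp).contDiffAt).isSymmSndFDerivAt (n := 2) (by simp)
  have hfd : AnalyticOnNhd ℂ (fderiv ℂ f) U := hf.fderiv
  have key : ∀ u' u : ℂ × ℂ, pd u' (pd u f) p = fderiv ℂ (fderiv ℂ f) p u' u := by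
    intro u' u
    have h1 : HasFDerivAt (fun q => fderiv ℂ f q u)
        ((ContinuousLinearMap.apply ℂ ℂ u).comp (fderiv ℂ (fderiv ℂ f) p)) p :=
      (ContinuousLinearMap.apply ℂ ℂ u).hasFDerivAt.comp p
        (hfd p hp).differentiableAt.hasFDerivAt
    show fderiv ℂ (fun q => fderiv ℂ f q u) p u' = _
    rw [h1.fderiv]
    rfl
  rw [key v w, key w v, hsymm.eq]

lemma pd_comm_iter {f : ℂ × ℂ → ℂ} {U : Set (ℂ × ℂ)} (hU : IsOpen U)
    (hf : AnalyticOnNhd ℂ f U) (v w : ℂ × ℂ) (k m : ℕ) :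
    ∀ p ∈ U, (pd v)^[k] ((pd w)^[m] f) p = (pd w)^[m] ((pd v)^[k] f) p := by
  -- first: one pd v through (pd w)^[m]
  have A : ∀ (g : ℂ × ℂ → ℂ), AnalyticOnNhd ℂ g U → ∀ m, ∀ p ∈ U,
      pd v ((pd w)^[m] g) p = (pd w)^[m] (pd v g) p := by
    intro g hg m
    induction m with
    | zero => intro p _; rfl
    | succ m ih =>
      intro p hp
      rw [Function.iterate_succ_apply', Function.iterate_succ_apply']
      rw [pd_comm hU (pd_iter_analytic hg w m) hp v w]
      exact pd_congr hU ih hp w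
  induction k with
  | zero => intro p _; rfl
  | succ k ih =>
    intro p hp
    rw [Function.iterate_succ_apply', Function.iterate_succ_apply']
    have h1 : pd v ((pd v)^[k] ((pd w)^[m] f)) p
        = pd v ((pd w)^[m] ((pd v)^[k] f)) p :=
      pd_congr hU ih hp v
    rw [h1]
    exact A ((pd v)^[k] f) (pd_iter_analytic hf v k) m p hp

lemma sliceDeriv2 {f : ℂ × ℂ → ℂ} {t x : ℂ} (hf : DifferentiableAt ℂ f (t, x)) :
    HasDerivAt (fun x => f (t, x)) (pd (0, 1) f (t, x)) x := by
  have h := hf.hasFDerivAt.comp_hasDerivAt x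
    ((hasDerivAt_const x t).prodMk (hasDerivAt_id x))
  simpa [pd, Function.comp_def] using h

lemma sliceDeriv1 {f : ℂ × ℂ → ℂ} {t x : ℂ} (hf : DifferentiableAt ℂ f (t, x)) :
    HasDerivAt (fun t => f (t, x)) (pd (1, 0) f (t, x)) t := by
  have h := hf.hasFDerivAt.comp_hasDerivAt t
    ((hasDerivAt_id t).prodMk (hasDerivAt_const t x))
  simpa [pd, Function.comp_def] using h

lemma iter_slice2 {f : ℂ × ℂ → ℂ} {U : Set (ℂ × ℂ)} (hU : IsOpen U)
    (hf : AnalyticOnNhd ℂ f U) (m : ℕ) :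
    ∀ t x : ℂ, (t, x) ∈ U →
      iteratedDeriv m (fun x => f (t, x)) x = (pd (0, 1))^[m] f (t, x) := by
  induction m with
  | zero => intro t x _; rfl
  | succ m ih =>
    intro t x hx
    have hopen : IsOpen {x : ℂ | (t, x) ∈ U} := hU.preimage (by fun_prop)
    have hev : (iteratedDeriv m (fun x => f (t, x)))
        =ᶠ[nhds x] fun x => (pd (0, 1))^[m] f (t, x) := by
      filter_upwards [hopen.mem_nhds hx] with x' hx' using ih t x' hx'
    rw [iteratedDeriv_succ, hev.deriv_eq, Function.iterate_succ_apply']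
    exact (sliceDeriv2 ((pd_iter_analytic hf (0, 1) m) _ hx).differentiableAt).deriv

lemma iter_slice1 {f : ℂ × ℂ → ℂ} {U : Set (ℂ × ℂ)} (hU : IsOpen U)
    (hf : AnalyticOnNhd ℂ f U) (k : ℕ) :
    ∀ t x : ℂ, (t, x) ∈ U →
      iteratedDeriv k (fun t => f (t, x)) t = (pd (1, 0))^[k] f (t, x) := by
  induction k with
  | zero => intro t x _; rfl
  | succ k ih =>
    intro t x hx
    have hopen : IsOpen {t : ℂ | (t, x) ∈ U} := hU.preimage (by fun_prop)
    have hev : (iteratedDeriv k (fun t => f (t, x)))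
        =ᶠ[nhds t] fun t => (pd (1, 0))^[k] f (t, x) := by
      filter_upwards [hopen.mem_nhds hx] with t' ht' using ih t' x ht'
    rw [iteratedDeriv_succ, hev.deriv_eq, Function.iterate_succ_apply']
    exact (sliceDeriv1 ((pd_iter_analytic hf (1, 0) k) _ hx).differentiableAt).deriv

theorem mixed_symm {f : ℂ × ℂ → ℂ} {U : Set (ℂ × ℂ)} (hU : IsOpen U)
    (hf : AnalyticOnNhd ℂ f U) (h00 : ((0 : ℂ), (0 : ℂ)) ∈ U) (k m : ℕ) :
    iteratedDeriv k (fun t => iteratedDeriv m (fun x => f (t, x)) 0) 0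
      = iteratedDeriv m (fun x => iteratedDeriv k (fun t => f (t, x)) 0) 0 := by
  have hopen1 : IsOpen {t : ℂ | (t, (0 : ℂ)) ∈ U} := hU.preimage (by fun_prop)
  have hopen2 : IsOpen {x : ℂ | ((0 : ℂ), x) ∈ U} := hU.preimage (by fun_prop)
  have e1 : (fun t => iteratedDeriv m (fun x => f (t, x)) 0)
      =ᶠ[nhds 0] fun t => (pd (0, 1))^[m] f (t, 0) := by
    filter_upwards [hopen1.mem_nhds h00] with t ht using iter_slice2 hU hf m t 0 ht
  have e2 : (fun x => iteratedDeriv k (fun t => f (t, x)) 0)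
      =ᶠ[nhds 0] fun x => (pd (1, 0))^[k] f (0, x) := by
    filter_upwards [hopen2.mem_nhds h00] with x hx using iter_slice1 hU hf k 0 x hx
  rw [e1.iteratedDeriv_eq k, e2.iteratedDeriv_eq m]
  rw [iter_slice1 hU (pd_iter_analytic hf (0, 1) m) k 0 0 h00]
  rw [iter_slice2 hU (pd_iter_analytic hf (1, 0) k) m 0 0 h00]
  exact pd_comm_iter hU hf (1, 0) (0, 1) k m _ h00

end Aux

theorem stmt13 (g : Matrix (Fin 2) (Fin 2) ℂ) (hdet : g.det ≠ 0)
    (hcd : g 1 0 + g 1 1 ≠ 0)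
    (hg1 : (g 0 0 + g 0 1) / (g 1 0 + g 1 1) ≠ 1)
    (hac : g 0 0 ≠ g 1 0) (hC : condC g) :
    ∀ (k m : ℕ) (y w : ℂ),
      polyB g m k y (w - 1) = -(1 / g.det) * polyB g⁻¹ k m w (y - 1) := by
  intro k m y w
  set a := g 0 0 with ha
  set b := g 0 1 with hb
  set c := g 1 0 with hc
  set d := g 1 1 with hd
  set Δ := g.det with hΔdef
  have hΔ : Δ ≠ 0 := hdet
  have hΔinv : (Δ : ℂ)⁻¹ ≠ 0 := inv_ne_zero hΔ
  have habcd : c + d - (a + b) ≠ 0 := by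
    intro h
    exact hg1 (by field_simp; linear_combination -h)
  have hca : c - a ≠ 0 := sub_ne_zero.mpr (Ne.symm hac)
  -- inverse entries
  have hi : g⁻¹ 0 0 = Δ⁻¹ * d ∧ g⁻¹ 0 1 = Δ⁻¹ * (-b) ∧
      g⁻¹ 1 0 = Δ⁻¹ * (-c) ∧ g⁻¹ 1 1 = Δ⁻¹ * a := by
    rw [Matrix.inv_def, Matrix.adjugate_fin_two, Ring.inverse_eq_inv']
    simp [Matrix.smul_apply, ha, hb, hc, hd, hΔdef]
  obtain ⟨i00, i01, i10, i11⟩ := hi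
  -- the two-variable function
  set D : ℂ × ℂ → ℂ := fun p =>
    c * Complex.exp (-p.1) + d - a * (Complex.exp (-p.1) * Complex.exp p.2)
      - b * Complex.exp p.2 with hD
  set F : ℂ × ℂ → ℂ := fun p =>
    Complex.exp ((w - 1) * p.1) * Complex.exp (y * p.2) / D p with hF
  set U : Set (ℂ × ℂ) := {p | D p ≠ 0 ∧ c * Complex.exp (-p.1) + d ≠ 0 ∧
    c - a * Complex.exp p.2 ≠ 0} with hU
  have hDcont : Continuous D := by fun_prop
  have hUopen : IsOpen U := by
    apply IsOpen.inter (isOpen_ne.preimage hDcont)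
    exact IsOpen.inter
      (isOpen_ne.preimage (by fun_prop))
      (isOpen_ne.preimage (by fun_prop))
  have h00 : ((0 : ℂ), (0 : ℂ)) ∈ U := by
    refine ⟨?_, ?_, ?_⟩ <;> simp only [hD, Complex.exp_zero, neg_zero, mul_one, one_mul]
    · intro h; exact habcd (by linear_combination h)
    · exact hcd
    · exact hca
  have hDan : ∀ p : ℂ × ℂ, AnalyticAt ℂ D p := fun p =>
    (((analyticAt_const.mul (analyticAt_fst.neg.cexp)).add analyticAt_const).sub
      (analyticAt_const.mul ((analyticAt_fst.neg.cexp).mul analyticAt_snd.cexp))).sub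
      (analyticAt_const.mul analyticAt_snd.cexp)
  have hNan : ∀ p : ℂ × ℂ, AnalyticAt ℂ
      (fun p : ℂ × ℂ => Complex.exp ((w - 1) * p.1) * Complex.exp (y * p.2)) p := fun p =>
    ((analyticAt_const.mul analyticAt_fst).cexp).mul ((analyticAt_const.mul analyticAt_snd).cexp)
  have hFanalytic : AnalyticOnNhd ℂ F U := fun p hp => (hNan p).div (hDan p) hp.1
  -- Claim 1
  have claim1 : ∀ t : ℂ, (t, (0 : ℂ)) ∈ U →
      Complex.exp ((w - 1) * t) * PhiNeg m y (act g (Complex.exp (-t))) /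
        jD g (Complex.exp (-t))
      = iteratedDeriv m (fun x => F (t, x)) 0 := by
    intro t ht
    obtain ⟨hD0, hp0, -⟩ := ht
    set P := c * Complex.exp (-t) + d with hP
    set Q := a * Complex.exp (-t) + b with hQ
    have hPQ : P - Q ≠ 0 := by
      intro h; apply hD0
      simp only [hD, Complex.exp_zero, mul_one]
      linear_combination h
    have hfun : (fun x => F (t, x))
        = fun x => Complex.exp ((w - 1) * t) *
            (Complex.exp (y * x) / (P - Q * Complex.exp x)) := by
      funext x
      have hden : D (t, x) = P - Q * Complex.exp x := by
        simp only [hD, hP, hQ]; ring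
      rw [hF]
      simp only [hden]
      rw [mul_div_assoc]
    rw [hfun, iteratedDeriv_cmul]
    beta_reduce
    rw [L1 y P Q hp0 hPQ]
    have hact : act g (Complex.exp (-t)) = Q / P := rfl
    have hjD : jD g (Complex.exp (-t)) = P := rfl
    rw [hact, hjD, mul_div_assoc]
  -- Claim 2
  have claim2 : ∀ x : ℂ, ((0 : ℂ), x) ∈ U →
      -(1 / Δ) * (Complex.exp ((y - 1) * x) * PhiNeg k w (act g⁻¹ (Complex.exp (-x))) /
        jD g⁻¹ (Complex.exp (-x)))
      = iteratedDeriv k (fun t => F (t, x)) 0 := by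
    intro x hx
    obtain ⟨hD0, -, hPne⟩ := hx
    set P := c - a * Complex.exp x with hP
    set Q := b * Complex.exp x - d with hQ
    have hx1 : ∀ u : ℂ, Complex.exp (-u) * Complex.exp u = 1 := by
      intro u; rw [← Complex.exp_add]; simp
    have hPQ : P - Q ≠ 0 := by
      intro h; apply hD0
      simp only [hD, Complex.exp_zero, neg_zero, mul_one, one_mul]
      linear_combination h
    have hfun : (fun t => F (t, x))
        = fun t => Complex.exp (y * x) *
            (Complex.exp (w * t) / (P - Q * Complex.exp t)) := by
      funext t
      have hden : D (t, x) = (P - Q * Complex.exp t) * Complex.exp (-t) := by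
        simp only [hD, hP, hQ]
        linear_combination (b * Complex.exp x - d) * hx1 t
      rw [hF]
      simp only [hden]
      rw [div_mul_eq_div_div, div_eq_mul_inv (_ / _), Complex.exp_neg, inv_inv]
      have hw : Complex.exp (w * t) = Complex.exp ((w - 1) * t) * Complex.exp t := by
        rw [← Complex.exp_add]; ring_nf
      rw [hw]
      ring
    rw [hfun, iteratedDeriv_cmul]
    beta_reduce
    rw [L1 w P Q hPne hPQ]
    have hjD : jD g⁻¹ (Complex.exp (-x)) = -(Δ⁻¹ * Complex.exp (-x)) * P := by
      show g⁻¹ 1 0 * Complex.exp (-x) + g⁻¹ 1 1 = _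
      rw [i10, i11, hP]
      linear_combination (-(Δ⁻¹ * a)) * hx1 x
    have hact : act g⁻¹ (Complex.exp (-x)) = Q / P := by
      show (g⁻¹ 0 0 * Complex.exp (-x) + g⁻¹ 0 1) / jD g⁻¹ (Complex.exp (-x)) = _
      rw [i00, i01, hjD]
      have hnum : Δ⁻¹ * d * Complex.exp (-x) + Δ⁻¹ * (-b)
          = -(Δ⁻¹ * Complex.exp (-x)) * Q := by
        rw [hQ]; linear_combination (Δ⁻¹ * b) * hx1 x
      rw [hnum, mul_div_mul_left _ _ (by
        simp only [neg_ne_zero]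
        exact mul_ne_zero hΔinv (Complex.exp_ne_zero _))]
    rw [hact, hjD]
    have hyx : Complex.exp (y * x) = Complex.exp ((y - 1) * x) * Complex.exp x := by
      rw [← Complex.exp_add]; ring_nf
    rw [hyx]
    rw [Complex.exp_neg]
    field_simp
  -- assemble
  have hopen1 : IsOpen {t : ℂ | (t, (0 : ℂ)) ∈ U} := hUopen.preimage (by fun_prop)
  have hopen2 : IsOpen {x : ℂ | ((0 : ℂ), x) ∈ U} := hUopen.preimage (by fun_prop)
  have e1 : (fun t : ℂ => Complex.exp ((w - 1) * t) *
        PhiNeg m y (act g (Complex.exp (-t))) / jD g (Complex.exp (-t)))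
      =ᶠ[nhds 0] fun t => iteratedDeriv m (fun x => F (t, x)) 0 := by
    filter_upwards [hopen1.mem_nhds h00] with t ht using claim1 t ht
  have e2 : (fun x : ℂ => -(1 / Δ) * (Complex.exp ((y - 1) * x) *
        PhiNeg k w (act g⁻¹ (Complex.exp (-x))) / jD g⁻¹ (Complex.exp (-x))))
      =ᶠ[nhds 0] fun x => iteratedDeriv k (fun t => F (t, x)) 0 := by
    filter_upwards [hopen2.mem_nhds h00] with x hx using claim2 x hx
  show iteratedDeriv k (fun t : ℂ => Complex.exp ((w - 1) * t) *
      PhiNeg m y (act g (Complex.exp (-t))) / jD g (Complex.exp (-t))) 0 = _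
  rw [e1.iteratedDeriv_eq k, mixed_symm hUopen hFanalytic h00 k m,
    ← e2.iteratedDeriv_eq m, iteratedDeriv_cmul]
  rfl
end

section
/- Let g = [[a,b],[c,d]] ∈ GL₂(ℂ) with c+d ≠ 0 and g1 = (a+b)/(c+d) ≠ 1. Then for all k, m ∈ ℤ≥0 and all y, w ∈ ℂ: a·𝔹_m^{(−k)}(y+1, w−1; g) + b·𝔹_m^{(−k)}(y+1, w; g) = c·𝔹_m^{(−k)}(y, w−1; g) + d·𝔹_m^{(−k)}(y, w; g) − y^k·w^m. -/
lemma phi_analytic (k : ℕ) (y : ℂ) : AnalyticOnNhd ℂ (PhiNeg k y) {z : ℂ | z ≠ 1} := by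
  induction k generalizing y with
  | zero =>
    simp only [PhiNeg]
    exact analyticOnNhd_const.div (analyticOnNhd_const.sub (analyticOnNhd_id))
      (fun z hz => sub_ne_zero.mpr (Ne.symm hz))
  | succ k ih =>
    simp only [PhiNeg]
    exact ((analyticOnNhd_const.mul (ih y)).add (analyticOnNhd_id.mul ((ih y).deriv)))

lemma phi_key (k : ℕ) (y u : ℂ) (hu : u ≠ 1) :
    u * PhiNeg k (y + 1) u = PhiNeg k y u - y ^ k := by
  induction k generalizing y u with
  | zero =>
    simp only [PhiNeg, pow_zero]
    field_simp [sub_ne_zero.mpr (Ne.symm hu)]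
    ring
  | succ k ih =>
    have hopen : IsOpen {z : ℂ | z ≠ 1} := isOpen_ne
    have hder : PhiNeg k (y + 1) u + u * deriv (PhiNeg k (y + 1)) u =
        deriv (PhiNeg k y) u := by
      have hev : (fun z => z * PhiNeg k (y + 1) z) =ᶠ[nhds u]
          (fun z => PhiNeg k y z - y ^ k) := by
        filter_upwards [hopen.mem_nhds hu] with z hz
        exact ih y z hz
      have h1 := hev.deriv_eq
      have hd1 : DifferentiableAt ℂ (PhiNeg k (y + 1)) u :=
        (phi_analytic k (y + 1) u hu).differentiableAt
      have hd0 : DifferentiableAt ℂ (PhiNeg k y) u :=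
        (phi_analytic k y u hu).differentiableAt
      rw [deriv_fun_mul differentiableAt_fun_id hd1, deriv_id'', one_mul] at h1
      rw [deriv_fun_sub hd0 (differentiableAt_const _), deriv_const] at h1
      simpa using h1
    simp only [PhiNeg]
    have h2 := ih y u hu
    linear_combination (y + 1) * h2 + u * hder - h2

lemma iDW_open {n : ℕ} {s : Set ℂ} {f : ℂ → ℂ} {x : ℂ} (hs : IsOpen s) (hx : x ∈ s) :
    iteratedDerivWithin n f s x = iteratedDeriv n f x := by
  rw [iteratedDerivWithin_eq_iteratedFDerivWithin, iteratedDeriv_eq_iteratedFDeriv,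
    iteratedFDerivWithin_of_isOpen n hs hx]

theorem stmt15 (g : Matrix (Fin 2) (Fin 2) ℂ) (hdet : g.det ≠ 0)
    (hcd : g 1 0 + g 1 1 ≠ 0)
    (hg1 : (g 0 0 + g 0 1) / (g 1 0 + g 1 1) ≠ 1) :
    ∀ (k m : ℕ) (y w : ℂ),
      g 0 0 * polyB g k m (y + 1) (w - 1) + g 0 1 * polyB g k m (y + 1) w =
        g 1 0 * polyB g k m y (w - 1) + g 1 1 * polyB g k m y w - y ^ k * w ^ m := by
  intro k m y w
  -- the four functions
  set F1 : ℂ → ℂ := fun t => Complex.exp ((w - 1) * t) *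
    PhiNeg k (y + 1) (act g (Complex.exp (-t))) / jD g (Complex.exp (-t)) with hF1def
  set F2 : ℂ → ℂ := fun t => Complex.exp (w * t) *
    PhiNeg k (y + 1) (act g (Complex.exp (-t))) / jD g (Complex.exp (-t)) with hF2def
  set F3 : ℂ → ℂ := fun t => Complex.exp ((w - 1) * t) *
    PhiNeg k y (act g (Complex.exp (-t))) / jD g (Complex.exp (-t)) with hF3def
  set F4 : ℂ → ℂ := fun t => Complex.exp (w * t) *
    PhiNeg k y (act g (Complex.exp (-t))) / jD g (Complex.exp (-t)) with hF4def
  -- basic analyticity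
  have hZ : ∀ t : ℂ, AnalyticAt ℂ (fun t : ℂ => Complex.exp (-t)) t := by
    intro t; exact (analyticAt_id.neg).cexp
  have hJan : ∀ t : ℂ, AnalyticAt ℂ (fun t : ℂ => jD g (Complex.exp (-t))) t := by
    intro t
    exact (analyticAt_const.mul (hZ t)).add analyticAt_const
  have hJ0 : jD g (Complex.exp (-(0:ℂ))) = g 1 0 + g 1 1 := by
    simp [jD]
  have hJ0ne : jD g (Complex.exp (-(0:ℂ))) ≠ 0 := by rw [hJ0]; exact hcd
  have hAan : AnalyticAt ℂ (fun t : ℂ => act g (Complex.exp (-t))) 0 := by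
    exact ((analyticAt_const.mul (hZ 0)).add analyticAt_const).div (hJan 0) hJ0ne
  have hA0 : act g (Complex.exp (-(0:ℂ))) ≠ 1 := by
    simpa [act, jD] using hg1
  have hFan : ∀ y' w' : ℂ, AnalyticAt ℂ (fun t : ℂ => Complex.exp (w' * t) *
      PhiNeg k y' (act g (Complex.exp (-t))) / jD g (Complex.exp (-t))) 0 := by
    intro y' w'
    have hphi : AnalyticAt ℂ (PhiNeg k y') (act g (Complex.exp (-(0:ℂ)))) :=
      phi_analytic k y' _ hA0
    have hcomp : AnalyticAt ℂ (fun t : ℂ => PhiNeg k y' (act g (Complex.exp (-t)))) 0 :=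
      AnalyticAt.comp (g := PhiNeg k y') (f := fun t : ℂ => act g (Complex.exp (-t)))
        hphi hAan
    exact (((analyticAt_const.mul analyticAt_id).cexp).mul hcomp).div (hJan 0) hJ0ne
  -- eventual facts near 0
  have hev : ∀ᶠ t in nhds (0:ℂ),
      AnalyticAt ℂ F1 t ∧ AnalyticAt ℂ F2 t ∧ AnalyticAt ℂ F3 t ∧ AnalyticAt ℂ F4 t ∧
      jD g (Complex.exp (-t)) ≠ 0 ∧ act g (Complex.exp (-t)) ≠ 1 := by
    have e1 := (hFan (y+1) (w-1)).eventually_analyticAt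
    have e2 := (hFan (y+1) w).eventually_analyticAt
    have e3 := (hFan y (w-1)).eventually_analyticAt
    have e4 := (hFan y w).eventually_analyticAt
    have e5 : ∀ᶠ t in nhds (0:ℂ), jD g (Complex.exp (-t)) ≠ 0 :=
      (hJan 0).continuousAt.eventually_ne hJ0ne
    have e6 : ∀ᶠ t in nhds (0:ℂ), act g (Complex.exp (-t)) ≠ 1 :=
      hAan.continuousAt.eventually_ne hA0
    filter_upwards [e1, e2, e3, e4, e5, e6] with t h1 h2 h3 h4 h5 h6
    exact ⟨h1, h2, h3, h4, h5, h6⟩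
  obtain ⟨ε, hε, hball⟩ := Metric.eventually_nhds_iff.mp hev
  set s : Set ℂ := Metric.ball 0 ε with hsdef
  have hs : IsOpen s := Metric.isOpen_ball
  have h0 : (0:ℂ) ∈ s := Metric.mem_ball_self hε
  have hu : UniqueDiffOn ℂ s := hs.uniqueDiffOn
  have hmem : ∀ t ∈ s, AnalyticAt ℂ F1 t ∧ AnalyticAt ℂ F2 t ∧ AnalyticAt ℂ F3 t ∧
      AnalyticAt ℂ F4 t ∧ jD g (Complex.exp (-t)) ≠ 0 ∧ act g (Complex.exp (-t)) ≠ 1 := by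
    intro t ht
    have ht' : dist t 0 < ε := by rw [hsdef] at ht; exact Metric.mem_ball.mp ht
    exact hball ht'
  have hCD1 : ContDiffOn ℂ m F1 s := AnalyticOnNhd.contDiffOn (fun t ht => (hmem t ht).1) hu
  have hCD2 : ContDiffOn ℂ m F2 s := AnalyticOnNhd.contDiffOn (fun t ht => (hmem t ht).2.1) hu
  have hCD3 : ContDiffOn ℂ m F3 s := AnalyticOnNhd.contDiffOn (fun t ht => (hmem t ht).2.2.1) hu
  have hCD4 : ContDiffOn ℂ m F4 s := AnalyticOnNhd.contDiffOn (fun t ht => (hmem t ht).2.2.2.1) hu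
  have hCDe : ContDiffOn ℂ m (fun t : ℂ => y ^ k * Complex.exp (w * t)) s :=
    (contDiffOn_const.mul ((contDiffOn_const.mul contDiffOn_id).cexp))
  -- the functional identity on s
  have hid : Set.EqOn (fun t => g 0 0 * F1 t + g 0 1 * F2 t)
      (fun t => g 1 0 * F3 t + g 1 1 * F4 t - y ^ k * Complex.exp (w * t)) s := by
    intro t ht
    obtain ⟨-, -, -, -, hJt, hAt⟩ := hmem t ht
    simp only [hF1def, hF2def, hF3def, hF4def]
    have hkey := phi_key k y (act g (Complex.exp (-t))) hAt
    have hexp : Complex.exp ((w - 1) * t) = Complex.exp (w * t) * Complex.exp (-t) := by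
      rw [← Complex.exp_add]; ring_nf
    simp only [act] at hkey ⊢
    simp only [jD] at hJt hkey ⊢
    set Z := Complex.exp (-t)
    have hkey' : (g 0 0 * Z + g 0 1) *
        PhiNeg k (y + 1) ((g 0 0 * Z + g 0 1) / (g 1 0 * Z + g 1 1)) =
        (g 1 0 * Z + g 1 1) *
        (PhiNeg k y ((g 0 0 * Z + g 0 1) / (g 1 0 * Z + g 1 1)) - y ^ k) := by
      rw [div_mul_eq_mul_div, div_eq_iff hJt] at hkey
      linear_combination hkey
    rw [hexp]
    generalize PhiNeg k (y + 1) ((g 0 0 * Z + g 0 1) / (g 1 0 * Z + g 1 1)) = P1 at hkey' ⊢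
    generalize PhiNeg k y ((g 0 0 * Z + g 0 1) / (g 1 0 * Z + g 1 1)) = P3 at hkey' ⊢
    have hJinv : (g 1 0 * Z + g 1 1) * (g 1 0 * Z + g 1 1)⁻¹ = 1 := mul_inv_cancel₀ hJt
    linear_combination Complex.exp (w * t) * (g 1 0 * Z + g 1 1)⁻¹ * hkey' - y ^ k * Complex.exp (w * t) * hJinv
  -- put it together
  have hmain := iteratedDerivWithin_congr (n := m) hid h0
  have split1 : iteratedDerivWithin m (fun t => g 0 0 * F1 t + g 0 1 * F2 t) s 0 =
      g 0 0 * iteratedDeriv m F1 0 + g 0 1 * iteratedDeriv m F2 0 := by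
    rw [show (fun t => g 0 0 * F1 t + g 0 1 * F2 t) =
        ((fun t => g 0 0 * F1 t) + (fun t => g 0 1 * F2 t)) from rfl,
      iteratedDerivWithin_add h0 hu ((contDiffOn_const.mul hCD1) 0 h0) ((contDiffOn_const.mul hCD2) 0 h0),
      iteratedDerivWithin_const_mul h0 hu _ (hCD1 0 h0),
      iteratedDerivWithin_const_mul h0 hu _ (hCD2 0 h0),
      iDW_open hs h0, iDW_open hs h0]
  have split2 : iteratedDerivWithin m
      (fun t => g 1 0 * F3 t + g 1 1 * F4 t - y ^ k * Complex.exp (w * t)) s 0 =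
      g 1 0 * iteratedDeriv m F3 0 + g 1 1 * iteratedDeriv m F4 0 - y ^ k * w ^ m := by
    rw [show (fun t => g 1 0 * F3 t + g 1 1 * F4 t - y ^ k * Complex.exp (w * t)) =
        ((fun t => g 1 0 * F3 t + g 1 1 * F4 t) -
          (fun t : ℂ => y ^ k * Complex.exp (w * t))) from rfl,
      iteratedDerivWithin_sub h0 hu
        (((contDiffOn_const.mul hCD3).add (contDiffOn_const.mul hCD4)) 0 h0) (hCDe 0 h0),
      show (fun t => g 1 0 * F3 t + g 1 1 * F4 t) =
        ((fun t => g 1 0 * F3 t) + (fun t => g 1 1 * F4 t)) from rfl,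
      iteratedDerivWithin_add h0 hu ((contDiffOn_const.mul hCD3) 0 h0) ((contDiffOn_const.mul hCD4) 0 h0),
      iteratedDerivWithin_const_mul h0 hu _ (hCD3 0 h0),
      iteratedDerivWithin_const_mul h0 hu _ (hCD4 0 h0),
      iteratedDerivWithin_const_mul h0 hu _
        ((show ContDiffOn ℂ m (fun t : ℂ => Complex.exp (w * t)) s from
          (contDiffOn_const.mul contDiffOn_id).cexp) 0 h0),
      iDW_open hs h0, iDW_open hs h0, iDW_open hs h0]
    have : iteratedDeriv m (fun t : ℂ => Complex.exp (w * t)) 0 = w ^ m := by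
      rw [show (fun t : ℂ => Complex.exp (w * t)) = (fun t : ℂ => Complex.exp (w * t)) from rfl]
      have := congrFun (iteratedDeriv_cexp_const_mul m w) 0
      simpa using this
    rw [this]
  have hp1 : polyB g k m (y + 1) (w - 1) = iteratedDeriv m F1 0 := rfl
  have hp2 : polyB g k m (y + 1) w = iteratedDeriv m F2 0 := rfl
  have hp3 : polyB g k m y (w - 1) = iteratedDeriv m F3 0 := rfl
  have hp4 : polyB g k m y w = iteratedDeriv m F4 0 := rfl
  rw [hp1, hp2, hp3, hp4, ← split1, ← split2, hmain]
end

section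
/- Let h = [[α,β],[γ,δ]] ∈ GL₂(ℂ) with γ+δ ≠ 0 and h1 = (α+β)/(γ+δ) ≠ 1, and let f = [[0,1],[1,0]]. Then for all k, m ∈ ℤ≥0 and all y, w ∈ ℂ: 𝔹_m^{(−k)}(y, w; hf) = (−1)^m · 𝔹_m^{(−k)}(y, −w−1; h), where hf denotes the matrix product (note that (hf)1 = h1 and the bottom row sum of hf equals γ+δ, so both sides are defined). -/
theorem stmt16 (h : Matrix (Fin 2) (Fin 2) ℂ) (hdet : h.det ≠ 0)
    (hcd : h 1 0 + h 1 1 ≠ 0)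
    (hg1 : (h 0 0 + h 0 1) / (h 1 0 + h 1 1) ≠ 1) :
    ∀ (k m : ℕ) (y w : ℂ),
      polyB (h * !![(0 : ℂ), 1; 1, 0]) k m y w = (-1 : ℂ) ^ m * polyB h k m y (-w - 1) := by
  intro k m y w
  have ha : (h * !![(0 : ℂ), 1; 1, 0]) 0 0 = h 0 1 := by
    simp [Matrix.mul_apply, Fin.sum_univ_two]
  have hb : (h * !![(0 : ℂ), 1; 1, 0]) 0 1 = h 0 0 := by
    simp [Matrix.mul_apply, Fin.sum_univ_two]
  have hc : (h * !![(0 : ℂ), 1; 1, 0]) 1 0 = h 1 1 := by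
    simp [Matrix.mul_apply, Fin.sum_univ_two]
  have hd : (h * !![(0 : ℂ), 1; 1, 0]) 1 1 = h 1 0 := by
    simp [Matrix.mul_apply, Fin.sum_univ_two]
  have key : (fun t : ℂ =>
      Complex.exp (w * t) * PhiNeg k y (act (h * !![(0 : ℂ), 1; 1, 0]) (Complex.exp (-t))) /
        jD (h * !![(0 : ℂ), 1; 1, 0]) (Complex.exp (-t)))
      = (fun t : ℂ =>
      Complex.exp ((-w - 1) * (-t)) * PhiNeg k y (act h (Complex.exp (-(-t)))) /
        jD h (Complex.exp (-(-t)))) := by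
    funext t
    have hE : Complex.exp t ≠ 0 := Complex.exp_ne_zero _
    have hEA : Complex.exp t * Complex.exp (-t) = 1 := by
      rw [← Complex.exp_add, add_neg_cancel, Complex.exp_zero]
    have hact : act (h * !![(0 : ℂ), 1; 1, 0]) (Complex.exp (-t))
        = act h (Complex.exp (-(-t))) := by
      simp only [act, jD, ha, hb, hc, hd, neg_neg]
      rw [← mul_div_mul_left (h 0 1 * Complex.exp (-t) + h 0 0)
        (h 1 1 * Complex.exp (-t) + h 1 0) hE]
      congr 1
      · linear_combination (h 0 1 : ℂ) * hEA
      · linear_combination (h 1 1 : ℂ) * hEA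
    rw [hact]
    have hjd : jD h (Complex.exp (-(-t)))
        = Complex.exp t * jD (h * !![(0 : ℂ), 1; 1, 0]) (Complex.exp (-t)) := by
      simp only [jD, hc, hd, neg_neg]
      linear_combination (-(h 1 1) : ℂ) * hEA
    have hex : Complex.exp ((-w - 1) * (-t)) = Complex.exp t * Complex.exp (w * t) := by
      rw [← Complex.exp_add]
      ring_nf
    rw [hjd, hex, mul_assoc, mul_div_mul_left _ _ hE]
  have H := iteratedDeriv_comp_neg m (fun s : ℂ =>
    Complex.exp ((-w - 1) * s) * PhiNeg k y (act h (Complex.exp (-s))) /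
      jD h (Complex.exp (-s))) (0 : ℂ)
  rw [neg_zero] at H
  show iteratedDeriv m _ 0 = _
  rw [key]
  exact H
end

section
/- Let d ∈ ℂ ∖ {0} and let h_d = [[−1,1],[0,d]] ∈ GL₂(ℂ). Then for all k, m ∈ ℤ≥0 and all y, w ∈ ℂ: 𝔹_m^{(−k)}(y, w; h_d) = Σ_{n=0}^{m} (y+n)^k · Σ_{j=0}^{n} C(n,j)·(−1)^j·(w−j)^m / d^{n+1}. -/
open Filter Finset

/-- The derivative of a function analytic at a point is analytic there. -/
private lemma analyticAt_deriv' {f : ℂ → ℂ} {x : ℂ} (h : AnalyticAt ℂ f x) :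
    AnalyticAt ℂ (deriv f) x :=
  (AnalyticOnNhd.deriv (s := {z : ℂ | AnalyticAt ℂ f z}) (fun _ hz => hz)) x h

private lemma phiNeg_analyticAt (k : ℕ) (y : ℂ) : AnalyticAt ℂ (PhiNeg k y) 0 := by
  induction k with
  | zero =>
    show AnalyticAt ℂ (fun z : ℂ => 1 / (1 - z)) 0
    exact analyticAt_const.div (analyticAt_const.sub (analyticAt_id)) (by norm_num)
  | succ k ih =>
    show AnalyticAt ℂ (fun z : ℂ => y * PhiNeg k y z + z * deriv (PhiNeg k y) z) 0
    exact (analyticAt_const.mul ih).add (analyticAt_id.mul (analyticAt_deriv' ih))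

/-- Local expansion of `PhiNeg` to any finite order at `0`. -/
private lemma phiNeg_expand (k : ℕ) (y : ℂ) : ∀ m : ℕ, ∃ R : ℂ → ℂ, AnalyticAt ℂ R 0 ∧
    ∀ᶠ z in nhds (0 : ℂ), PhiNeg k y z =
      (∑ n ∈ Finset.range (m + 1), (y + n) ^ k * z ^ n) + z ^ (m + 1) * R z := by
  induction k with
  | zero =>
    intro m
    refine ⟨fun z => 1 / (1 - z),
      analyticAt_const.div (analyticAt_const.sub analyticAt_id) (by norm_num), ?_⟩
    have hcont : ContinuousAt (fun z : ℂ => z) 0 := continuousAt_id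
    have hne : ∀ᶠ z in nhds (0 : ℂ), z ≠ 1 := hcont.eventually_ne (by norm_num)
    filter_upwards [hne] with z hz
    have h1 : (1 : ℂ) - z ≠ 0 := sub_ne_zero.mpr (fun h => hz h.symm)
    show 1 / (1 - z) = _
    have hgeom : ∑ n ∈ Finset.range (m + 1), (y + n) ^ 0 * z ^ n
        = (z ^ (m + 1) - 1) / (z - 1) := by
      simp only [pow_zero, one_mul]
      exact geom_sum_eq hz (m + 1)
    have h2 : z - 1 ≠ 0 := sub_ne_zero.mpr hz
    rw [hgeom]
    field_simp
    ring
  | succ k ih =>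
    intro m
    obtain ⟨R, hR, hev⟩ := ih (m + 1)
    rw [show m + 1 + 1 = m + 2 from rfl] at hev
    have hRd : AnalyticAt ℂ (deriv R) 0 := analyticAt_deriv' hR
    refine ⟨fun z => (y + ((m : ℂ) + 1)) ^ (k + 1)
        + z * ((y + ((m : ℂ) + 2)) * R z + z * deriv R z),
      analyticAt_const.add (analyticAt_id.mul
        (((analyticAt_const.mul hR)).add (analyticAt_id.mul hRd))), ?_⟩
    have hev' : PhiNeg k y =ᶠ[nhds (0 : ℂ)] fun z =>
        (∑ n ∈ Finset.range (m + 1 + 1), (y + n) ^ k * z ^ n) + z ^ (m + 1 + 1) * R z := hev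
    have hevd := hev'.deriv
    filter_upwards [hev, hevd, hR.eventually_analyticAt] with z h1 h2 h3
    show y * PhiNeg k y z + z * deriv (PhiNeg k y) z = _
    -- compute the derivative of the expansion
    have hdS : ∀ n ∈ Finset.range (m + 2), HasDerivAt (fun z : ℂ => (y + n) ^ k * z ^ n)
        ((y + n) ^ k * (n * z ^ (n - 1))) z :=
      fun n _ => (hasDerivAt_pow n z).const_mul _
    have hdR : HasDerivAt R (deriv R z) z := h3.differentiableAt.hasDerivAt
    have hD : HasDerivAt (fun z : ℂ =>
        (∑ n ∈ Finset.range (m + 2), (y + n) ^ k * z ^ n) + z ^ (m + 2) * R z)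
        ((∑ n ∈ Finset.range (m + 2), (y + n) ^ k * (n * z ^ (n - 1)))
          + (((m + 2 : ℕ) * z ^ (m + 1)) * R z + z ^ (m + 2) * deriv R z)) z :=
      (HasDerivAt.fun_sum hdS).add ((hasDerivAt_pow (m + 2) z).fun_mul hdR)
    have hDz : deriv (PhiNeg k y) z
        = (∑ n ∈ Finset.range (m + 2), (y + n) ^ k * (n * z ^ (n - 1)))
          + (((m + 2 : ℕ) * z ^ (m + 1)) * R z + z ^ (m + 2) * deriv R z) := by
      rw [h2]; exact hD.deriv
    rw [h1, hDz]
    have key : y * (∑ n ∈ Finset.range (m + 2), (y + n) ^ k * z ^ n)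
        + z * (∑ n ∈ Finset.range (m + 2), (y + n) ^ k * (n * z ^ (n - 1)))
        = ∑ n ∈ Finset.range (m + 2), (y + n) ^ (k + 1) * z ^ n := by
      rw [Finset.mul_sum, Finset.mul_sum, ← Finset.sum_add_distrib]
      refine Finset.sum_congr rfl fun n _ => ?_
      cases n with
      | zero => simp [pow_succ]; ring
      | succ p =>
        have hzz : z * ((y + (p + 1 : ℕ)) ^ k * (((p + 1 : ℕ) : ℂ) * z ^ (p + 1 - 1)))
            = (y + (p + 1 : ℕ)) ^ k * (((p + 1 : ℕ) : ℂ) * z ^ (p + 1)) := by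
          simp only [Nat.add_sub_cancel, pow_succ]; ring
        rw [hzz, pow_succ]
        push_cast
        ring
    rw [Finset.sum_range_succ (fun n : ℕ => (y + (n : ℂ)) ^ (k + 1) * z ^ n) (m + 1)] at key
    push_cast at key ⊢
    linear_combination key

/-- Iterated derivatives at a point of high-order vanishing products are zero. -/
private lemma vanish : ∀ (j r : ℕ) (u v : ℂ → ℂ), AnalyticAt ℂ u 0 → u 0 = 0 →
    AnalyticAt ℂ v 0 → iteratedDeriv j (fun t => u t ^ (j + 1 + r) * v t) 0 = 0 := by
  intro j
  induction j with
  | zero =>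
    intro r u v hu hu0 hv
    simp [iteratedDeriv_zero, hu0]
  | succ j ih =>
    intro r u v hu hu0 hv
    rw [iteratedDeriv_succ']
    set w : ℂ → ℂ := fun t =>
      ((j + 1 + 1 + r : ℕ) : ℂ) * deriv u t * v t + u t * deriv v t with hw
    have hwa : AnalyticAt ℂ w 0 :=
      ((analyticAt_const.mul (analyticAt_deriv' hu)).mul hv).add
        (hu.mul (analyticAt_deriv' hv))
    have hev : deriv (fun t => u t ^ (j + 1 + 1 + r) * v t) =ᶠ[nhds (0 : ℂ)]
        fun t => u t ^ (j + 1 + r) * w t := by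
      filter_upwards [hu.eventually_analyticAt, hv.eventually_analyticAt] with t hut hvt
      have h1 : HasDerivAt u (deriv u t) t := hut.differentiableAt.hasDerivAt
      have h2 : HasDerivAt v (deriv v t) t := hvt.differentiableAt.hasDerivAt
      have h3 := ((h1.fun_pow (j + 1 + 1 + r)).fun_mul h2).deriv
      rw [h3, hw]
      have he : j + 1 + 1 + r - 1 = j + 1 + r := by omega
      have he2 : j + 1 + 1 + r = (j + 1 + r) + 1 := by omega
      rw [he, he2, pow_succ]
      ring
    rw [hev.iteratedDeriv_eq j]
    exact ih r u w hu hu0 hwa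

/-- `iteratedDeriv` is additive at a point for functions analytic there. -/
private lemma iteratedDeriv_add_at : ∀ (m : ℕ) (f g : ℂ → ℂ) (x : ℂ),
    AnalyticAt ℂ f x → AnalyticAt ℂ g x →
    iteratedDeriv m (fun t => f t + g t) x = iteratedDeriv m f x + iteratedDeriv m g x := by
  intro m
  induction m with
  | zero => intro f g x _ _; simp
  | succ m ih =>
    intro f g x hf hg
    rw [iteratedDeriv_succ', iteratedDeriv_succ', iteratedDeriv_succ']
    have hev : deriv (fun t => f t + g t) =ᶠ[nhds x] fun t => deriv f t + deriv g t := by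
      filter_upwards [hf.eventually_analyticAt, hg.eventually_analyticAt] with t hft hgt
      exact deriv_add hft.differentiableAt hgt.differentiableAt
    rw [hev.iteratedDeriv_eq m]
    exact ih (deriv f) (deriv g) x (analyticAt_deriv' hf) (analyticAt_deriv' hg)

private lemma iteratedDeriv_cexp_mul (c a : ℂ) : ∀ m : ℕ,
    iteratedDeriv m (fun t : ℂ => c * Complex.exp (a * t)) = fun t => c * a ^ m * Complex.exp (a * t) := by
  intro m
  induction m with
  | zero => funext t; simp
  | succ m ih =>
    rw [iteratedDeriv_succ, ih]
    funext t
    have h0 : HasDerivAt (fun t : ℂ => Complex.exp (a * t)) (Complex.exp (a * t) * a) t := by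
      simpa using ((hasDerivAt_id t).const_mul a).cexp
    have h : HasDerivAt (fun t : ℂ => c * a ^ m * Complex.exp (a * t))
        (c * a ^ m * (Complex.exp (a * t) * a)) t := h0.const_mul _
    rw [h.deriv, pow_succ]
    ring

private lemma iteratedDeriv_fun_sum' {ι : Type*} (s : Finset ι) (f : ι → ℂ → ℂ) (m : ℕ)
    (h : ∀ i ∈ s, ContDiff ℂ m (f i)) (x : ℂ) :
    iteratedDeriv m (fun t => ∑ i ∈ s, f i t) x = ∑ i ∈ s, iteratedDeriv m (f i) x := by
  simp only [iteratedDeriv_eq_iteratedFDeriv]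
  rw [show (fun t => ∑ i ∈ s, f i t) = (∑ i ∈ s, f i ·) from rfl, iteratedFDeriv_sum h]
  simp

theorem stmt17 (d : ℂ) (hd : d ≠ 0) :
    ∀ (k m : ℕ) (y w : ℂ),
      polyB !![(-1 : ℂ), 1; 0, d] k m y w =
        ∑ n ∈ Finset.range (m + 1), (y + n) ^ k *
          ∑ j ∈ Finset.range (n + 1),
            (n.choose j : ℂ) * (-1) ^ j * (w - j) ^ m / d ^ (n + 1) := by
  intro k m y w
  obtain ⟨R, hR, hev⟩ := phiNeg_expand k y m
  set f : ℂ → ℂ := fun t => (1 - Complex.exp (-t)) / d with hf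
  have hbig : (fun t : ℂ =>
      Complex.exp (w * t) * PhiNeg k y (act !![(-1 : ℂ), 1; 0, d] (Complex.exp (-t))) /
        jD !![(-1 : ℂ), 1; 0, d] (Complex.exp (-t)))
      = fun t => Complex.exp (w * t) * PhiNeg k y (f t) / d := by
    funext t
    have h1 : act !![(-1 : ℂ), 1; 0, d] (Complex.exp (-t)) = f t := by
      simp only [act, jD, hf, Matrix.cons_val', Matrix.cons_val_zero, Matrix.cons_val_one,
        Matrix.head_cons, Matrix.empty_val', Matrix.cons_val_fin_one, Matrix.head_fin_const,
        Matrix.of_apply]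
      rw [zero_mul, zero_add]
      ring_nf
    have h2 : jD !![(-1 : ℂ), 1; 0, d] (Complex.exp (-t)) = d := by
      simp [jD]
    rw [h1, h2]
  have hf0 : f 0 = 0 := by simp [hf]
  have hfa : AnalyticAt ℂ f 0 :=
    (analyticAt_const.sub (analyticAt_cexp.comp analyticAt_id.neg)).div analyticAt_const hd
  -- the main part and the tail
  set G : ℂ → ℂ := fun t => ∑ n ∈ Finset.range (m + 1),
      ((y + n) ^ k * f t ^ n) * Complex.exp (w * t) / d with hG
  set V : ℂ → ℂ := fun t => R (f t) * Complex.exp (w * t) / d with hV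
  have hGa : AnalyticAt ℂ G 0 := by
    refine Finset.analyticAt_fun_sum _ fun n _ => ?_
    exact ((analyticAt_const.mul (hfa.pow n)).mul
      (analyticAt_cexp.comp (analyticAt_const.mul analyticAt_id))).div analyticAt_const hd
  have hVa : AnalyticAt ℂ V 0 := by
    have hR0 : AnalyticAt ℂ R (f 0) := by rw [hf0]; exact hR
    have hRf : AnalyticAt ℂ (fun t => R (f t)) 0 := hR0.comp hfa
    exact (hRf.mul (analyticAt_cexp.comp (analyticAt_const.mul analyticAt_id))).div
      analyticAt_const hd
  have hTa : AnalyticAt ℂ (fun t => f t ^ (m + 1) * V t) 0 := (hfa.pow _).mul hVa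
  -- F agrees with G + tail near 0
  have htend : Filter.Tendsto f (nhds 0) (nhds (0 : ℂ)) := by
    have := hfa.continuousAt.tendsto
    rwa [hf0] at this
  have hevF : (fun t => Complex.exp (w * t) * PhiNeg k y (f t) / d) =ᶠ[nhds (0 : ℂ)]
      fun t => G t + f t ^ (m + 1) * V t := by
    filter_upwards [htend.eventually hev] with t ht
    rw [show Complex.exp (w * t) * PhiNeg k y (f t) / d
        = (PhiNeg k y (f t)) * Complex.exp (w * t) / d by ring, ht]
    have e1 : (∑ n ∈ Finset.range (m + 1), (y + n) ^ k * f t ^ n) * Complex.exp (w * t) / d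
        = G t := by
      simp only [hG]
      rw [Finset.sum_mul, Finset.sum_div]
    have e2 : f t ^ (m + 1) * R (f t) * Complex.exp (w * t) / d = f t ^ (m + 1) * V t := by
      simp only [hV]; ring
    rw [add_mul, add_div, ← e1, ← e2]
  have hstep : polyB !![(-1 : ℂ), 1; 0, d] k m y w
      = iteratedDeriv m G 0 + iteratedDeriv m (fun t => f t ^ (m + 1) * V t) 0 := by
    rw [polyB, hbig, hevF.iteratedDeriv_eq m]
    exact iteratedDeriv_add_at m G _ 0 hGa hTa
  have hvan : iteratedDeriv m (fun t => f t ^ (m + 1) * V t) 0 = 0 := by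
    have := vanish m 0 f V hfa hf0 hVa
    simpa using this
  rw [hstep, hvan, add_zero]
  -- now compute the iterated derivative of G
  have hGeq : G = fun t => ∑ n ∈ Finset.range (m + 1), ∑ j ∈ Finset.range (n + 1),
      ((y + n) ^ k * (n.choose j : ℂ) * (-1) ^ j / d ^ (n + 1)) * Complex.exp ((w - j) * t) := by
    funext t
    refine Finset.sum_congr rfl fun n _ => ?_
    have hbin : (1 - Complex.exp (-t)) ^ n
        = ∑ j ∈ Finset.range (n + 1),
          (-Complex.exp (-t)) ^ j * 1 ^ (n - j) * (n.choose j : ℂ) := by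
      rw [show (1 : ℂ) - Complex.exp (-t) = -Complex.exp (-t) + 1 by ring]
      exact add_pow _ _ n
    have hfpow : f t ^ n = ∑ j ∈ Finset.range (n + 1),
        ((-Complex.exp (-t)) ^ j * 1 ^ (n - j) * (n.choose j : ℂ)) / d ^ n := by
      rw [hf]
      simp only []
      rw [div_pow, hbin, Finset.sum_div]
    have hE : ∀ j : ℕ, Complex.exp ((w - j) * t)
        = Complex.exp (w * t) * Complex.exp (-t) ^ j := by
      intro j
      rw [← Complex.exp_nat_mul, ← Complex.exp_add]
      congr 1
      ring
    calc (y + (n : ℂ)) ^ k * f t ^ n * Complex.exp (w * t) / d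
        = ∑ j ∈ Finset.range (n + 1),
            (y + (n : ℂ)) ^ k * (((-Complex.exp (-t)) ^ j * 1 ^ (n - j) * (n.choose j : ℂ))
              / d ^ n) * Complex.exp (w * t) / d := by
          rw [hfpow, Finset.mul_sum, Finset.sum_mul, Finset.sum_div]
      _ = ∑ j ∈ Finset.range (n + 1),
            ((y + (n : ℂ)) ^ k * (n.choose j : ℂ) * (-1) ^ j / d ^ (n + 1))
              * Complex.exp ((w - j) * t) := by
          refine Finset.sum_congr rfl fun j hj => ?_
          rw [hE j, neg_pow, one_pow]
          field_simp
          ring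
  rw [hGeq]
  have hcd : ∀ (c a : ℂ), ContDiff ℂ m (fun t : ℂ => c * Complex.exp (a * t)) := by
    intro c a
    exact (contDiff_const.mul ((Complex.contDiff_exp.of_le le_top).comp
      (contDiff_const.mul contDiff_id)))
  rw [iteratedDeriv_fun_sum' _ _ m (fun n _ => ?_) 0]
  swap
  · exact ContDiff.sum fun j _ => hcd _ _
  refine Finset.sum_congr rfl fun n _ => ?_
  rw [iteratedDeriv_fun_sum' _ _ m (fun j _ => hcd _ _) 0]
  rw [Finset.mul_sum]
  refine Finset.sum_congr rfl fun j _ => ?_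
  rw [iteratedDeriv_cexp_mul]
  simp only [mul_zero, Complex.exp_zero, mul_one]
  ring
end
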